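/- Let T₁, …, T_m : ℝⁿ → ℝⁿ be cutters with ⋂_{i=1}^m Fix T_i ≠ ∅, and let T := T_m ∘ T_{m−1} ∘ ⋯ ∘ T₁. Then T is strongly quasi-nonexpansive with respect to the common fixed points: for every x ∈ ℝⁿ and every z ∈ ⋂_{i=1}^m Fix T_i, ‖Tx − z‖ ≤ ‖x − z‖, and moreover ⋂_{i=1}^m Fix T_i ⊆ Fix T. -/

import Mathlib

/-- The composition `T_m ∘ T_{m-1} ∘ ⋯ ∘ T_1` of a finite family of operators
(`T 0` is applied first, `T (m-1)` last). -/
def compFamily {n m : ℕ}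
    (T : Fin m → (EuclideanSpace ℝ (Fin n) → EuclideanSpace ℝ (Fin n))) :
    EuclideanSpace ℝ (Fin n) → EuclideanSpace ℝ (Fin n) :=
  fun x => (List.ofFn T).foldl (fun y g => g y) x

lemma cutter_qne {n : ℕ} (S : EuclideanSpace ℝ (Fin n) → EuclideanSpace ℝ (Fin n))
    (x z : EuclideanSpace ℝ (Fin n)) (hz : S z = z)
    (h : (inner ℝ (S x - x) (S x - z) : ℝ) ≤ 0) : ‖S x - z‖ ≤ ‖x - z‖ := by
  have key : ‖S x - z‖ ^ 2 ≤ ‖x - z‖ * ‖S x - z‖ := by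
    have h1 : (inner ℝ (S x - z) (S x - z) : ℝ) =
        inner ℝ (S x - x) (S x - z) + inner ℝ (x - z) (S x - z) := by
      rw [← inner_add_left, sub_add_sub_cancel]
    have h2 : (inner ℝ (x - z) (S x - z) : ℝ) ≤ ‖x - z‖ * ‖S x - z‖ :=
      real_inner_le_norm _ _
    have := real_inner_self_eq_norm_sq (S x - z)
    nlinarith
  rcases eq_or_lt_of_le (norm_nonneg (S x - z)) with h0 | h0
  · rw [← h0]; exact norm_nonneg _
  · nlinarith

lemma foldl_qne {n : ℕ} (z : EuclideanSpace ℝ (Fin n))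
    (L : List (EuclideanSpace ℝ (Fin n) → EuclideanSpace ℝ (Fin n)))
    (hL : ∀ g ∈ L, g z = z ∧ ∀ x, ‖g x - z‖ ≤ ‖x - z‖) :
    (∀ x, ‖L.foldl (fun y g => g y) x - z‖ ≤ ‖x - z‖) ∧
      L.foldl (fun y g => g y) z = z := by
  induction L with
  | nil => exact ⟨fun x => le_refl _, rfl⟩
  | cons g L ih =>
    obtain ⟨hgz, hgq⟩ := hL g List.mem_cons_self
    have ih' := ih (fun g hg => hL g (List.mem_cons_of_mem _ hg))
    constructor
    · intro x
      simp only [List.foldl_cons]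
      exact le_trans (ih'.1 (g x)) (hgq x)
    · simp only [List.foldl_cons, hgz, ih'.2]

theorem compFamily_cutters_qne {n m : ℕ} (hm : 0 < m)
    (T : Fin m → (EuclideanSpace ℝ (Fin n) → EuclideanSpace ℝ (Fin n)))
    (hcut : ∀ i : Fin m, ∀ x y : EuclideanSpace ℝ (Fin n),
      T i y = y → (inner ℝ (T i x - x) (T i x - y) : ℝ) ≤ 0)
    (hfix : ∃ z : EuclideanSpace ℝ (Fin n), ∀ i : Fin m, T i z = z) :
    (∀ x z : EuclideanSpace ℝ (Fin n), (∀ i : Fin m, T i z = z) →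
        ‖compFamily T x - z‖ ≤ ‖x - z‖) ∧
      ∀ z : EuclideanSpace ℝ (Fin n), (∀ i : Fin m, T i z = z) → compFamily T z = z := by
  have main : ∀ z : EuclideanSpace ℝ (Fin n), (∀ i : Fin m, T i z = z) →
      (∀ x, ‖compFamily T x - z‖ ≤ ‖x - z‖) ∧ compFamily T z = z := by
    intro z hz
    apply foldl_qne
    intro g hg
    rw [List.mem_ofFn] at hg
    obtain ⟨i, rfl⟩ := hg
    exact ⟨hz i, fun x => cutter_qne _ x z (hz i) (hcut i x z (hz i))⟩
  exact ⟨fun x z hz => (main z hz).1 x, fun z hz => (main z hz).2⟩
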